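/- Fix an integer k ≥ 2 and let r ∈ (0,1). Define r_1 = r, r_i = {2^{i−2} r + 1/2} for i = 2, …, k−1, and r_k = 1 − {2^{k−2} r}, where {x} denotes the fractional part of x. Then: (a) ∑_{i=1}^k r_i = k/2 for every r ∈ (0,1); and (b) if r_1 is distributed Uniform(0,1), then each r_i (i = 1, …, k) is distributed Uniform(0,1). -/

import Mathlib

open MeasureTheory

/-- The permuted displacement construction (before permutation): `r₁ = r`,
`rᵢ = {2^{i−2} r + 1/2}` for `2 ≤ i ≤ k−1`, and `r_k = 1 − {2^{k−2} r}`.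
Here `j : Fin k` is the zero-based index, so `j = 0` corresponds to `r₁`. -/
noncomputable def pdSeq (k : ℕ) (r : ℝ) (j : Fin k) : ℝ :=
  if j.1 = 0 then r
  else if j.1 = k - 1 then 1 - Int.fract (2 ^ (k - 2) * r)
  else Int.fract (2 ^ (j.1 - 1) * r + 1 / 2)

/-- Hermite-type identity for the fractional part. -/
lemma pd_fract_half (x : ℝ) :
    Int.fract (x + 1 / 2) = Int.fract (2 * x) - Int.fract x + 1 / 2 := by
  have hx : (⌊x⌋ : ℝ) + Int.fract x = x := Int.floor_add_fract x
  set t := Int.fract x with ht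
  have h1 : Int.fract (x + 1 / 2) = Int.fract (t + 1 / 2) := by
    rw [← hx, add_assoc, Int.fract_intCast_add]
  have h2 : Int.fract (2 * x) = Int.fract (2 * t) := by
    rw [← hx, mul_add, show (2 : ℝ) * ⌊x⌋ = ((2 * ⌊x⌋ : ℤ) : ℝ) by push_cast; ring,
      Int.fract_intCast_add]
  have h0 : 0 ≤ t := Int.fract_nonneg x
  have h1' : t < 1 := Int.fract_lt_one x
  rcases lt_or_ge t (1 / 2) with h | h
  · rw [h1, h2, Int.fract_eq_self.mpr ⟨by linarith, by linarith⟩,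
      Int.fract_eq_self.mpr ⟨by linarith, by linarith⟩]
    ring
  · have e1 : Int.fract (t + 1 / 2) = t - 1 / 2 := by
      rw [show t + 1 / 2 = (t - 1 / 2) + ((1 : ℤ) : ℝ) by push_cast; ring, Int.fract_add_intCast,
        Int.fract_eq_self.mpr ⟨by linarith, by linarith⟩]
    have e2 : Int.fract (2 * t) = 2 * t - 1 := by
      rw [show 2 * t = (2 * t - 1) + ((1 : ℤ) : ℝ) by push_cast; ring, Int.fract_add_intCast,
        Int.fract_eq_self.mpr ⟨by linarith, by linarith⟩]
      push_cast
      ring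
    rw [h1, h2, e1, e2]; ring

/-- Part (a): the sum of the displacement variates is `k/2`. -/
lemma pdSeq_sum (k : ℕ) (hk : 2 ≤ k) (r : ℝ) (hr : r ∈ Set.Ioo (0 : ℝ) 1) :
    ∑ j : Fin k, pdSeq k r j = k / 2 := by
  obtain ⟨m, rfl⟩ : ∃ m, k = m + 2 := ⟨k - 2, by omega⟩
  set g : ℕ → ℝ := fun j =>
    if j = 0 then r
    else if j = (m + 2) - 1 then 1 - Int.fract (2 ^ ((m + 2) - 2) * r)
    else Int.fract (2 ^ (j - 1) * r + 1 / 2) with hg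
  have hsum : ∑ j : Fin (m + 2), pdSeq (m + 2) r j = ∑ i ∈ Finset.range (m + 2), g i := by
    rw [← Fin.sum_univ_eq_sum_range g (m + 2)]
    exact Finset.sum_congr rfl fun j _ => rfl
  have hfr : Int.fract r = r := Int.fract_eq_self.mpr ⟨hr.1.le, hr.2⟩
  have hmid : ∀ i ∈ Finset.range m,
      g (i + 1) = Int.fract (2 ^ (i + 1) * r) - Int.fract (2 ^ i * r) + 1 / 2 := by
    intro i hi
    have hi' : i < m := Finset.mem_range.mp hi
    have e : g (i + 1) = Int.fract (2 ^ i * r + 1 / 2) := by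
      simp only [hg]
      rw [if_neg (by omega), if_neg (by omega)]
      norm_num
    rw [e, pd_fract_half (2 ^ i * r), show (2 : ℝ) * (2 ^ i * r) = 2 ^ (i + 1) * r by ring]
  have h0 : g 0 = r := by simp [hg]
  have hlast : g (m + 1) = 1 - Int.fract (2 ^ m * r) := by
    simp only [hg]
    rw [if_neg (by omega), if_pos (by omega)]
    norm_num
  rw [hsum, Finset.sum_range_succ, Finset.sum_range_succ', Finset.sum_congr rfl hmid, h0, hlast]
  have htel : ∑ i ∈ Finset.range m,
      (Int.fract (2 ^ (i + 1) * r) - Int.fract (2 ^ i * r) + 1 / 2)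
      = (Int.fract (2 ^ m * r) - Int.fract (2 ^ 0 * r)) + m * (1 / 2) := by
    rw [Finset.sum_add_distrib, Finset.sum_range_sub (fun i => Int.fract (2 ^ i * r)) m]
    simp [mul_comm]
  rw [htel]
  simp only [pow_zero, one_mul, hfr]
  push_cast
  ring

/-- Core uniformity lemma: the fractional part of an integer-affine image of a
Uniform(0,1) random variable is again Uniform(0,1). -/
lemma map_fract_affine (a : ℤ) (ha : a ≠ 0) (c : ℝ) :
    Measure.map (fun x : ℝ => Int.fract ((a : ℝ) * x + c)) (volume.restrict (Set.Ioo (0 : ℝ) 1))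
      = volume.restrict (Set.Ioo (0 : ℝ) 1) := by
  haveI : Fact ((0 : ℝ) < 1) := ⟨one_pos⟩
  set mk1 : ℝ → AddCircle (1:ℝ) := fun x => (↑x : AddCircle (1:ℝ)) with hmk1
  have hF : Measurable fun x : ℝ => Int.fract ((a : ℝ) * x + c) :=
    ((measurable_id.const_mul _).add_const _).fract
  set rep : AddCircle (1 : ℝ) → ℝ := fun y => (AddCircle.equivIco 1 0 y : ℝ) with hrep
  have hrepm : Measurable rep :=
    measurable_subtype_coe.comp (AddCircle.measurableEquivIco (1 : ℝ) 0).measurable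
  have hfr : ∀ x : ℝ, rep (mk1 x) = Int.fract x := by
    intro x
    show ((AddCircle.equivIco 1 0 (QuotientAddGroup.mk x) : ℝ)) = Int.fract x
    rw [AddCircle.coe_equivIco_mk_apply]
    norm_num
  have hIoc : volume.restrict (Set.Ioo (0 : ℝ) 1) = volume.restrict (Set.Ioc (0 : ℝ) 1) :=
    Measure.restrict_congr_set Ioo_ae_eq_Ioc
  have hmk : MeasurePreserving (fun x : ℝ => (mk1 x))
      (volume.restrict (Set.Ioc (0 : ℝ) 1)) volume := by
    simpa using AddCircle.measurePreserving_mk 1 0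
  have hsm : MeasurePreserving (fun y : AddCircle (1:ℝ) => a • y + mk1 c)
      volume volume :=
    (measurePreserving_add_right volume _).comp (Measure.measurePreserving_zsmul volume ha)
  have hmkaff : MeasurePreserving (fun x : ℝ => mk1 ((a : ℝ) * x + c))
      (volume.restrict (Set.Ioc (0 : ℝ) 1)) volume := by
    have he : (fun x : ℝ => mk1 ((a : ℝ) * x + c))
        = (fun y : AddCircle (1:ℝ) => a • y + mk1 c)
          ∘ (fun x : ℝ => (mk1 x)) := by
      funext x
      show mk1 ((a : ℝ) * x + c) = a • (mk1 x) + mk1 c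
      rw [show (a : ℝ) * x = a • x from (zsmul_eq_mul x a).symm]
      rw [← QuotientAddGroup.mk_zsmul]
      rfl
    rw [he]
    exact hsm.comp hmk
  ext s hs
  rw [Measure.map_apply hF hs, hIoc]
  have hFdec : (fun x : ℝ => Int.fract ((a : ℝ) * x + c)) ⁻¹' s
      = (fun x : ℝ => mk1 ((a : ℝ) * x + c)) ⁻¹' (rep ⁻¹' s) := by
    ext x
    show Int.fract ((a : ℝ) * x + c) ∈ s ↔ rep (mk1 ((a : ℝ) * x + c)) ∈ s
    rw [hfr]
  rw [hFdec, hmkaff.measure_preimage (hrepm hs).nullMeasurableSet,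
    ← hmk.map_eq, Measure.map_apply hmk.measurable (hrepm hs)]
  have hcmp : (fun x : ℝ => (mk1 x)) ⁻¹' (rep ⁻¹' s) = Int.fract ⁻¹' s := by
    ext x
    show rep (mk1 x) ∈ s ↔ Int.fract x ∈ s
    rw [hfr]
  rw [hcmp, ← hIoc, Measure.restrict_apply (measurable_fract hs), Measure.restrict_apply hs]
  congr 1
  ext x
  constructor
  · rintro ⟨h1, h2⟩
    exact ⟨by rwa [Set.mem_preimage, Int.fract_eq_self.mpr ⟨h2.1.le, h2.2⟩] at h1, h2⟩
  · rintro ⟨h1, h2⟩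
    exact ⟨by rw [Set.mem_preimage, Int.fract_eq_self.mpr ⟨h2.1.le, h2.2⟩]; exact h1, h2⟩

/-- (a) The permuted displacement variates sum to `k/2` for every `r ∈ (0,1)`; and
(b) if `r` is Uniform(0,1), then each `rᵢ` is Uniform(0,1). -/
theorem pdSeq_sum_and_uniform (k : ℕ) (hk : 2 ≤ k)
    {Ω : Type*} [MeasurableSpace Ω] (μ : Measure Ω) [IsProbabilityMeasure μ]
    (X : Ω → ℝ) (hXm : Measurable X)
    (hXlaw : μ.map X = volume.restrict (Set.Ioo (0 : ℝ) 1)) :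
    (∀ r ∈ Set.Ioo (0 : ℝ) 1, ∑ j : Fin k, pdSeq k r j = k / 2) ∧
    (∀ j : Fin k,
      μ.map (fun ω => pdSeq k (X ω) j) = volume.restrict (Set.Ioo (0 : ℝ) 1)) := by
  constructor
  · exact fun r hr => pdSeq_sum k hk r hr
  intro j
  rcases eq_or_ne j.1 0 with hj | hj
  · have he : (fun ω => pdSeq k (X ω) j) = X := by
      funext ω; simp [pdSeq, hj]
    rw [he, hXlaw]
  rcases eq_or_ne j.1 (k - 1) with hj' | hj'
  · -- last coordinate
    set a : ℤ := -(2 ^ (k - 2)) with ha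
    have haz : a ≠ 0 := neg_ne_zero.mpr (pow_ne_zero _ two_ne_zero)
    have hFm : Measurable fun x : ℝ => Int.fract ((a : ℝ) * x + 0) :=
      ((measurable_id.const_mul _).add_const _).fract
    have he : (fun ω => pdSeq k (X ω) j)
        = (fun ω => 1 - Int.fract ((2 : ℝ) ^ (k - 2) * X ω)) := by
      funext ω
      simp only [pdSeq]
      rw [if_neg hj, if_pos hj']
    rw [he]
    -- a.e. equality with the fract form
    set B : Set ℝ := {x : ℝ | Int.fract ((2 : ℝ) ^ (k - 2) * x) = 0} with hB
    have hBm : MeasurableSet B :=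
      (measurable_fract.comp (measurable_id.const_mul _)) (measurableSet_singleton (0 : ℝ))
    have hBc : B.Countable := by
      have hsub : B ⊆ Set.range (fun z : ℤ => (z : ℝ) / 2 ^ (k - 2)) := by
        intro x hx
        have h2 : (2 : ℝ) ^ (k - 2) ≠ 0 := pow_ne_zero _ two_ne_zero
        refine ⟨⌊(2 : ℝ) ^ (k - 2) * x⌋, ?_⟩
        have : (2 : ℝ) ^ (k - 2) * x - ⌊(2 : ℝ) ^ (k - 2) * x⌋ = 0 := hx
        field_simp
        linarith
      exact (Set.countable_range _).mono hsub
    have hB0 : μ (X ⁻¹' B) = 0 := by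
      rw [show μ (X ⁻¹' B) = μ.map X B from (Measure.map_apply hXm hBm).symm, hXlaw]
      refine le_antisymm (le_trans (Measure.restrict_le_self _) ?_) (zero_le)
      rw [hBc.measure_zero volume]
    have hae : (fun ω => 1 - Int.fract ((2 : ℝ) ^ (k - 2) * X ω))
        =ᵐ[μ] (fun ω => Int.fract ((a : ℝ) * X ω + 0)) := by
      have hmem : ∀ᵐ ω ∂μ, X ω ∉ B := by
        rw [ae_iff]
        simpa using (show μ {a | X a ∈ B} = 0 from hB0)
      filter_upwards [hmem] with ω hω
      have hfz : Int.fract ((2 : ℝ) ^ (k - 2) * X ω) ≠ 0 := hω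
      have : ((a : ℝ)) = -((2 : ℝ) ^ (k - 2)) := by push_cast [ha]; ring
      rw [this, add_zero, show -((2:ℝ) ^ (k-2)) * X ω = -((2:ℝ) ^ (k-2) * X ω) by ring,
        Int.fract_neg hfz]
    rw [Measure.map_congr hae,
      show (fun ω => Int.fract ((a : ℝ) * X ω + 0))
        = (fun x : ℝ => Int.fract ((a : ℝ) * x + 0)) ∘ X from rfl,
      ← Measure.map_map hFm hXm, hXlaw, map_fract_affine a haz 0]
  · -- middle coordinate
    set a : ℤ := 2 ^ (j.1 - 1) with ha
    have haz : a ≠ 0 := pow_ne_zero _ two_ne_zero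
    have hFm : Measurable fun x : ℝ => Int.fract ((a : ℝ) * x + 1 / 2) :=
      ((measurable_id.const_mul _).add_const _).fract
    have he : (fun ω => pdSeq k (X ω) j)
        = (fun x : ℝ => Int.fract ((a : ℝ) * x + 1 / 2)) ∘ X := by
      funext ω
      have hcast : ((a : ℝ)) = (2 : ℝ) ^ (j.1 - 1) := by push_cast [ha]; ring
      simp only [pdSeq, Function.comp_apply]
      rw [if_neg hj, if_neg hj', hcast]
    rw [he, ← Measure.map_map hFm hXm, hXlaw, map_fract_affine a haz (1 / 2)]
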